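/- Let ρ and σ be n×n density matrices. Then λ(ρ − σ) ≺ λ(Λ↓(ρ) − E_nn), where E_nn = diag(0,…,0,1); equivalently, the eigenvalue vector of ρ − σ is majorized by the vector (λ_1(ρ), λ_2(ρ), …, λ_{n−1}(ρ), λ_n(ρ) − 1). -/

import Mathlib

open Matrix
open scoped ComplexOrder Classical

/-- The vector of a tuple's entries sorted in decreasing (nonincreasing) order. -/
noncomputable def sortDec {n : ℕ} (x : Fin n → ℝ) : Fin n → ℝ :=
  fun i => x (Tuple.sort x i.rev)

/-- The eigenvalues of a Hermitian matrix arranged in decreasing order,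
`λ(A)`; junk value `0` if `A` is not Hermitian. -/
noncomputable def eigsDec {n : ℕ} (A : Matrix (Fin n) (Fin n) ℂ) : Fin n → ℝ :=
  if hA : A.IsHermitian then sortDec hA.eigenvalues else 0

/-- The eigenvalues of a Hermitian matrix arranged in increasing order. -/
noncomputable def eigsInc {n : ℕ} (A : Matrix (Fin n) (Fin n) ℂ) : Fin n → ℝ :=
  fun i => eigsDec A i.rev

/-- `Λ↓(A)`: the diagonal matrix of the eigenvalues of `A` in decreasing order. -/
noncomputable def LambdaDown {n : ℕ} (A : Matrix (Fin n) (Fin n) ℂ) :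
    Matrix (Fin n) (Fin n) ℂ :=
  Matrix.diagonal fun i => (eigsDec A i : ℂ)

/-- `Λ↑(A)`: the diagonal matrix of the eigenvalues of `A` in increasing order. -/
noncomputable def LambdaUp {n : ℕ} (A : Matrix (Fin n) (Fin n) ℂ) :
    Matrix (Fin n) (Fin n) ℂ :=
  Matrix.diagonal fun i => (eigsInc A i : ℂ)

/-- `x ≺ y`: the sum of the `k` largest entries of `x` is at most that of `y`
for every `k`, with equality of the total sums. -/
def Majorizes {n : ℕ} (x y : Fin n → ℝ) : Prop :=
  (∀ k : ℕ, ∑ i ∈ Finset.univ.filter (fun i : Fin n => (i : ℕ) < k), sortDec x i ≤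
      ∑ i ∈ Finset.univ.filter (fun i : Fin n => (i : ℕ) < k), sortDec y i) ∧
    (∑ i, x i) = ∑ i, y i

/-- A function `d` is Schur-convex if `x ≺ y` implies `d x ≤ d y`. -/
def SchurConvex {n : ℕ} (d : (Fin n → ℝ) → ℝ) : Prop :=
  ∀ x y : Fin n → ℝ, Majorizes x y → d x ≤ d y

/-- A density matrix: positive semidefinite with trace one. -/
def IsDensityMatrix {n : ℕ} (ρ : Matrix (Fin n) (Fin n) ℂ) : Prop :=
  ρ.PosSemidef ∧ ρ.trace = 1

/-- A quantum channel: completely positive trace preserving map in Kraus form. -/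
def IsQuantumChannel {n : ℕ}
    (Φ : Matrix (Fin n) (Fin n) ℂ → Matrix (Fin n) (Fin n) ℂ) : Prop :=
  ∃ (r : ℕ) (F : Fin r → Matrix (Fin n) (Fin n) ℂ),
    (∑ j, (F j)ᴴ * F j) = 1 ∧ ∀ X, Φ X = ∑ j, F j * X * (F j)ᴴ

/-- A unital quantum channel. -/
def IsUnitalChannel {n : ℕ}
    (Φ : Matrix (Fin n) (Fin n) ℂ → Matrix (Fin n) (Fin n) ℂ) : Prop :=
  IsQuantumChannel Φ ∧ Φ 1 = 1

/-- A mixed unitary channel: a convex combination of unitary conjugations. -/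
def IsMixedUnitaryChannel {n : ℕ}
    (Φ : Matrix (Fin n) (Fin n) ℂ → Matrix (Fin n) (Fin n) ℂ) : Prop :=
  ∃ (r : ℕ) (t : Fin r → ℝ) (U : Fin r → Matrix (Fin n) (Fin n) ℂ),
    (∀ j, 0 ≤ t j) ∧ (∑ j, t j) = 1 ∧
      (∀ j, U j ∈ Matrix.unitaryGroup (Fin n) ℂ) ∧
      ∀ X, Φ X = ∑ j, (t j : ℂ) • (U j * X * (U j)ᴴ)

/-- Functional calculus: `f(A)` for a Hermitian matrix `A`, via the spectral theorem;
junk value `0` if `A` is not Hermitian. -/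
noncomputable def matFun {n : ℕ} (f : ℝ → ℝ) (A : Matrix (Fin n) (Fin n) ℂ) :
    Matrix (Fin n) (Fin n) ℂ :=
  if hA : A.IsHermitian then
    (hA.eigenvectorUnitary : Matrix (Fin n) (Fin n) ℂ) *
      Matrix.diagonal (fun i => (f (hA.eigenvalues i) : ℂ)) *
      (hA.eigenvectorUnitary : Matrix (Fin n) (Fin n) ℂ)ᴴ
  else 0

/-- The positive semidefinite square root of a PSD matrix, as `Matrix.PosSemidef.sqrt`
was defined in Mathlib (December 2024). -/
noncomputable def psdSqrt {n : ℕ} {A : Matrix (Fin n) (Fin n) ℂ} (hA : A.PosSemidef) :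
    Matrix (Fin n) (Fin n) ℂ :=
  hA.1.eigenvectorUnitary.1 * diagonal ((↑) ∘ (Real.sqrt ∘ hA.1.eigenvalues)) *
    (star hA.1.eigenvectorUnitary : Matrix (Fin n) (Fin n) ℂ)

/-- `|A| = (AᴴA)^{1/2}`. -/
noncomputable def matAbs {n : ℕ} (A : Matrix (Fin n) (Fin n) ℂ) :
    Matrix (Fin n) (Fin n) ℂ :=
  psdSqrt (Matrix.posSemidef_conjTranspose_mul_self A)

/-- `tr|A|`, the sum of the singular values of `A`. -/
noncomputable def traceAbs {n : ℕ} (A : Matrix (Fin n) (Fin n) ℂ) : ℝ :=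
  ((matAbs A).trace).re

/-- The singular values of `A` in decreasing order. -/
noncomputable def singVals {n : ℕ} (A : Matrix (Fin n) (Fin n) ℂ) : Fin n → ℝ :=
  eigsDec (matAbs A)

/-- The positive semidefinite square root of a PSD matrix (junk value `0` otherwise). -/
noncomputable def matSqrt {n : ℕ} (A : Matrix (Fin n) (Fin n) ℂ) :
    Matrix (Fin n) (Fin n) ℂ :=
  if hA : A.PosSemidef then psdSqrt hA else 0

/-- The fidelity `F(ρ,σ) = tr|ρ^{1/2} σ^{1/2}|`. -/
noncomputable def fidelity {n : ℕ} (ρ σ : Matrix (Fin n) (Fin n) ℂ) : ℝ :=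
  traceAbs (matSqrt ρ * matSqrt σ)

/-- The relative entropy `S(ρ‖σ) = tr(ρ (log ρ - log σ))`. -/
noncomputable def relEntropy {n : ℕ} (ρ σ : Matrix (Fin n) (Fin n) ℂ) : ℝ :=
  ((ρ * (matFun Real.log ρ - matFun Real.log σ)).trace).re

/-- The (real) trace of a matrix whose trace is real. -/
noncomputable def trR {n : ℕ} (A : Matrix (Fin n) (Fin n) ℂ) : ℝ := A.trace.re

noncomputable def eigPerm {n : ℕ} {A : Matrix (Fin n) (Fin n) ℂ} (hA : A.IsHermitian) :
    Equiv.Perm (Fin n) :=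
  (Fin.revPerm : Equiv.Perm (Fin n)).trans (Tuple.sort hA.eigenvalues)

lemma eigsDec_eq {n : ℕ} {A : Matrix (Fin n) (Fin n) ℂ} (hA : A.IsHermitian) (i : Fin n) :
    eigsDec A i = hA.eigenvalues (eigPerm hA i) := by
  simp [eigsDec, dif_pos hA, sortDec, eigPerm]

lemma antitone_sortDec {n : ℕ} (x : Fin n → ℝ) : Antitone (sortDec x) := by
  intro i j hij
  exact Tuple.monotone_sort x (by simpa [Fin.rev_le_rev] using hij)

lemma sortDec_eq_of_antitone {n : ℕ} {x : Fin n → ℝ} (hx : Antitone x) : sortDec x = x := by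
  have hmono : Monotone (x ∘ (Fin.revPerm : Equiv.Perm (Fin n))) := by
    intro i j hij
    exact hx (by simpa [Fin.rev_le_rev] using hij)
  have h := (Tuple.comp_sort_eq_comp_iff_monotone (f := x) (σ := Fin.revPerm)).mpr hmono
  funext i
  have := congrFun h i.rev
  simpa [sortDec] using this.symm

lemma antitone_eigsDec {n : ℕ} (A : Matrix (Fin n) (Fin n) ℂ) : Antitone (eigsDec A) := by
  unfold eigsDec
  split
  · exact antitone_sortDec _
  · exact antitone_const

lemma trace_re_eq_sum_eigenvalues {n : ℕ} {A : Matrix (Fin n) (Fin n) ℂ} (hA : A.IsHermitian) :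
    A.trace.re = ∑ i, hA.eigenvalues i := by
  conv_lhs => rw [hA.spectral_theorem, Unitary.conjStarAlgAut_apply]
  rw [Matrix.trace_mul_cycle, Unitary.coe_star_mul_self hA.eigenvectorUnitary, Matrix.one_mul,
    Matrix.trace_diagonal]
  simp [Complex.re_sum]

lemma scalar_kyfan {n k : ℕ} (hk : k < n) (D C : Fin n → ℝ) (hD : Antitone D)
    (hC0 : ∀ i, 0 ≤ C i) (hC1 : ∀ i, C i ≤ 1)
    (hsum : ∑ i, C i = ∑ i : Fin n, (if (i : ℕ) < k then (1 : ℝ) else 0)) :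
    ∑ i, D i * C i ≤ ∑ i ∈ Finset.univ.filter (fun i : Fin n => (i : ℕ) < k), D i := by
  have key : ∀ i : Fin n, D i * C i - (if (i : ℕ) < k then D i else 0) ≤
      D ⟨k, hk⟩ * (C i - if (i : ℕ) < k then 1 else 0) := by
    intro i
    by_cases h : (i : ℕ) < k
    · simp only [if_pos h]
      have hDi : D ⟨k, hk⟩ ≤ D i := hD (by simp [Fin.le_def]; omega)
      nlinarith [hC1 i]
    · simp only [if_neg h]
      have hDi : D i ≤ D ⟨k, hk⟩ := hD (by simp [Fin.le_def]; omega)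
      nlinarith [hC0 i]
  have h1 : ∑ i, (D i * C i - (if (i : ℕ) < k then D i else 0)) ≤
      ∑ i, D ⟨k, hk⟩ * (C i - if (i : ℕ) < k then 1 else 0) :=
    Finset.sum_le_sum fun i _ => key i
  rw [Finset.sum_sub_distrib] at h1
  rw [← Finset.mul_sum, Finset.sum_sub_distrib, hsum, sub_self, mul_zero] at h1
  rw [Finset.sum_filter]
  linarith

lemma kyFan {n k : ℕ} (hk : k < n) {ρ σ : Matrix (Fin n) (Fin n) ℂ}
    (hρ : ρ.PosSemidef) (hσ : σ.PosSemidef) :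
    ∑ i ∈ Finset.univ.filter (fun i : Fin n => (i : ℕ) < k), eigsDec (ρ - σ) i ≤
    ∑ i ∈ Finset.univ.filter (fun i : Fin n => (i : ℕ) < k), eigsDec ρ i := by
  classical
  have hA : (ρ - σ).IsHermitian := hρ.isHermitian.sub hσ.isHermitian
  set U : Matrix (Fin n) (Fin n) ℂ := (hA.eigenvectorUnitary : Matrix (Fin n) (Fin n) ℂ) with hUdef
  have hUU : star U * U = 1 := Unitary.coe_star_mul_self hA.eigenvectorUnitary
  have hUU' : U * star U = 1 := Unitary.coe_mul_star_self hA.eigenvectorUnitary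
  set e := eigPerm hA with hedef
  set d : Fin n → ℂ := fun i => if ((e.symm i : Fin n) : ℕ) < k then (1 : ℂ) else 0 with hddef
  set Dk : Matrix (Fin n) (Fin n) ℂ := Matrix.diagonal d with hDkdef
  set P : Matrix (Fin n) (Fin n) ℂ := U * Dk * star U with hPdef
  have hsUU : ∀ X : Matrix (Fin n) (Fin n) ℂ, star U * (U * X) = X := fun X => by
    rw [← Matrix.mul_assoc, hUU, Matrix.one_mul]
  set DA : Matrix (Fin n) (Fin n) ℂ :=
    Matrix.diagonal (RCLike.ofReal ∘ hA.eigenvalues) with hDAdef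
  have hspec : ρ - σ = U * DA * star U := hA.spectral_theorem
  -- trace of P * (ρ - σ)
  have htr1 : (P * (ρ - σ)).trace.re =
      ∑ i ∈ Finset.univ.filter (fun i : Fin n => (i : ℕ) < k), eigsDec (ρ - σ) i := by
    have h1 : P * (ρ - σ) = U * (Dk * DA) * star U := by
      rw [hspec, hPdef]
      simp only [Matrix.mul_assoc, hsUU]
    rw [h1, Matrix.trace_mul_cycle, hUU, Matrix.one_mul, hDkdef, hDAdef,
      Matrix.diagonal_mul_diagonal, Matrix.trace_diagonal]
    have h2 : ∀ j : Fin n, d j * (RCLike.ofReal ∘ hA.eigenvalues) j =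
        if ((e.symm j : Fin n) : ℕ) < k then ((hA.eigenvalues j : ℝ) : ℂ) else 0 := by
      intro j; simp [hddef, ite_mul]
    simp only [h2]
    rw [← Equiv.sum_comp e (fun j => if ((e.symm j : Fin n) : ℕ) < k
      then ((hA.eigenvalues j : ℝ) : ℂ) else 0)]
    simp only [Equiv.symm_apply_apply]
    rw [Complex.re_sum, Finset.sum_filter]
    congr 1; funext i
    split_ifs with h
    · rw [eigsDec_eq hA]; simp [hedef]
    · simp
  -- positivity of P and trace of P * σ
  have hd0 : (0 : Fin n → ℂ) ≤ d := by
    intro i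
    simp only [hddef]
    split_ifs
    · exact zero_le_one
    · exact le_rfl
  have hDkP : Dk.PosSemidef := Matrix.PosSemidef.diagonal hd0
  have hP : P.PosSemidef := by
    have := hDkP.mul_mul_conjTranspose_same U
    simpa [hPdef, Matrix.star_eq_conjTranspose] using this
  have hdd : d * d = d := by
    funext i; simp only [hddef, Pi.mul_apply]; split_ifs <;> simp
  have hds : star d = d := by
    funext i; simp only [hddef, Pi.star_apply]; split_ifs <;> simp
  have hDkDk : Dk * Dk = Dk := by
    rw [hDkdef, Matrix.diagonal_mul_diagonal]
    exact congrArg Matrix.diagonal hdd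
  have hDkH : Dkᴴ = Dk := by
    rw [hDkdef, Matrix.diagonal_conjTranspose]
    exact congrArg Matrix.diagonal hds
  have htr2 : 0 ≤ (P * σ).trace.re := by
    set M : Matrix (Fin n) (Fin n) ℂ := U * Dk with hMdef
    have hPM : P = M * Mᴴ := by
      have h4 : M * Mᴴ = U * (Dk * Dk) * Uᴴ := by
        rw [hMdef, Matrix.conjTranspose_mul, hDkH]
        simp only [Matrix.mul_assoc]
      rw [h4, hDkDk, hPdef, Matrix.star_eq_conjTranspose]
    have h3 : (P * σ).trace = (Mᴴ * σ * M).trace := by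
      rw [hPM, Matrix.mul_assoc, Matrix.trace_mul_comm, Matrix.mul_assoc]
    rw [h3]
    have hPSD : (Mᴴ * σ * M).PosSemidef := hσ.conjTranspose_mul_mul_same M
    -- trace re nonneg
    rw [Matrix.trace, Complex.re_sum]
    refine Finset.sum_nonneg fun i _ => ?_
    have h := hPSD.re_dotProduct_nonneg (Pi.single i 1)
    simpa [dotProduct, Matrix.mulVec, Pi.single_apply, apply_ite,
      Finset.sum_ite_eq', mul_ite, ite_mul] using h
  -- step 3 : trace of P * ρ bounded by top-k eigenvalues of ρ
  have hρH : ρ.IsHermitian := hρ.isHermitian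
  set V : Matrix (Fin n) (Fin n) ℂ := (hρH.eigenvectorUnitary : Matrix (Fin n) (Fin n) ℂ)
    with hVdef
  have hVV : star V * V = 1 := Unitary.coe_star_mul_self hρH.eigenvectorUnitary
  have hVV' : V * star V = 1 := Unitary.coe_mul_star_self hρH.eigenvectorUnitary
  set f := eigPerm hρH with hfdef
  set Q : Matrix (Fin n) (Fin n) ℂ := star V * P * V with hQdef
  set c : Fin n → ℝ := fun i => (Q i i).re with hcdef
  have hspecρ : ρ = V * Matrix.diagonal (RCLike.ofReal ∘ hρH.eigenvalues) * star V :=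
    hρH.spectral_theorem
  have hQtr : (P * ρ).trace = ∑ i, Q i i * ((hρH.eigenvalues i : ℝ) : ℂ) := by
    have h5 : (P * ρ).trace = (Q * Matrix.diagonal (RCLike.ofReal ∘ hρH.eigenvalues)).trace := by
      conv_lhs => rw [hspecρ]
      rw [hQdef]
      rw [← Matrix.mul_assoc, ← Matrix.mul_assoc, Matrix.trace_mul_cycle (P * V) _ (star V),
        ← Matrix.mul_assoc, ← Matrix.mul_assoc]
    rw [h5]
    rw [Matrix.trace]
    congr 1; funext i
    simp [Matrix.diag, Matrix.mul_apply, Matrix.diagonal_apply, Finset.sum_ite_eq', mul_ite]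
  have hQP : Q.PosSemidef := by
    have := hP.conjTranspose_mul_mul_same V
    simpa [hQdef, Matrix.star_eq_conjTranspose] using this
  have hc0 : ∀ i, 0 ≤ c i := by
    intro i
    have h := hQP.re_dotProduct_nonneg (Pi.single i 1)
    simpa [hcdef, dotProduct, Matrix.mulVec, Pi.single_apply, apply_ite,
      Finset.sum_ite_eq', mul_ite, ite_mul] using h
  have h1P : (1 - P).PosSemidef := by
    have h6 : 1 - P = U * Matrix.diagonal (fun i => 1 - d i) * star U := by
      have h7 : Matrix.diagonal (fun i => (1 : ℂ) - d i) = 1 - Dk := by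
        rw [hDkdef, ← Matrix.diagonal_one, Matrix.diagonal_sub]
      rw [h7, Matrix.mul_sub, Matrix.sub_mul, Matrix.mul_one, hUU', hPdef]
    rw [h6]
    have hd1 : (0 : Fin n → ℂ) ≤ fun i => 1 - d i := by
      intro i
      simp only [hddef, Pi.zero_apply]
      split_ifs <;> simp
    have := (Matrix.PosSemidef.diagonal hd1).mul_mul_conjTranspose_same U
    simpa [Matrix.star_eq_conjTranspose] using this
  have h1Q : (1 - Q).PosSemidef := by
    have h8 : 1 - Q = star V * (1 - P) * V := by
      rw [Matrix.mul_sub, Matrix.sub_mul, Matrix.mul_one, hQdef, ← Matrix.mul_assoc, hVV]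
    rw [h8]
    have := h1P.conjTranspose_mul_mul_same V
    simpa [Matrix.star_eq_conjTranspose] using this
  have hc1 : ∀ i, c i ≤ 1 := by
    intro i
    have h := h1Q.re_dotProduct_nonneg (Pi.single i 1)
    have h9 : ((1 - Q) i i).re = 1 - c i := by
      simp [hcdef, Matrix.sub_apply, Matrix.one_apply_eq]
    have h10 : 0 ≤ ((1 - Q) i i).re := by
      simpa [dotProduct, Matrix.mulVec, Pi.single_apply, apply_ite,
        Finset.sum_ite_eq', mul_ite, ite_mul] using h
    linarith [h9 ▸ h10]
  have hcsum : ∑ i, c i = ∑ i : Fin n, (if (i : ℕ) < k then (1 : ℝ) else 0) := by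
    have htrQ : Q.trace = P.trace := by
      rw [hQdef, Matrix.trace_mul_cycle, hVV', Matrix.one_mul]
    have htrP : P.trace = ∑ i, d i := by
      rw [hPdef, Matrix.trace_mul_cycle, hUU, Matrix.one_mul, hDkdef, Matrix.trace_diagonal]
    have h11 : ∑ i, c i = Q.trace.re := by
      rw [Matrix.trace, Complex.re_sum]; rfl
    rw [h11, htrQ, htrP, Complex.re_sum]
    rw [← Equiv.sum_comp e (fun j => (d j).re)]
    congr 1; funext i
    simp only [hddef, Equiv.symm_apply_apply]
    split_ifs <;> simp
  have hfin : (P * ρ).trace.re ≤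
      ∑ i ∈ Finset.univ.filter (fun i : Fin n => (i : ℕ) < k), eigsDec ρ i := by
    rw [hQtr, Complex.re_sum]
    have h12 : ∀ i, (Q i i * ((hρH.eigenvalues i : ℝ) : ℂ)).re = hρH.eigenvalues i * c i := by
      intro i
      simp [hcdef, Complex.mul_re, mul_comm]
    simp only [h12]
    rw [← Equiv.sum_comp f (fun i => hρH.eigenvalues i * c i)]
    have h13 : ∀ i, hρH.eigenvalues (f i) = eigsDec ρ i := fun i => (eigsDec_eq hρH i).symm
    simp only [h13]
    refine scalar_kyfan hk (eigsDec ρ) (fun i => c (f i)) (antitone_eigsDec ρ)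
      (fun i => hc0 _) (fun i => hc1 _) ?_
    rw [Equiv.sum_comp f c, hcsum]
  have hsplit : (P * (ρ - σ)).trace.re = (P * ρ).trace.re - (P * σ).trace.re := by
    rw [Matrix.mul_sub, Matrix.trace_sub, Complex.sub_re]
  linarith

/-- For density matrices `ρ, σ`, the eigenvalue vector of `ρ - σ` is majorized
by `(λ_1(ρ), …, λ_{n-1}(ρ), λ_n(ρ) - 1)`. -/
theorem stmt_7 {n : ℕ} (ρ σ : Matrix (Fin n) (Fin n) ℂ)
    (hρ : IsDensityMatrix ρ) (hσ : IsDensityMatrix σ) :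
    Majorizes (eigsDec (ρ - σ))
      (fun i : Fin n => eigsDec ρ i - if (i : ℕ) = n - 1 then 1 else 0) := by
  obtain ⟨hρP, hρtr⟩ := hρ
  obtain ⟨hσP, hσtr⟩ := hσ
  have hn : 0 < n := by
    by_contra h
    push_neg at h
    have hn0 : n = 0 := by omega
    subst hn0
    rw [show ρ.trace = 0 by simp [Matrix.trace]] at hρtr
    exact zero_ne_one hρtr
  have hA : (ρ - σ).IsHermitian := hρP.isHermitian.sub hσP.isHermitian
  set y : Fin n → ℝ := fun i => eigsDec ρ i - if (i : ℕ) = n - 1 then 1 else 0 with hydef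
  have hyAnti : Antitone y := by
    intro i j hij
    rcases eq_or_lt_of_le hij with rfl | hlt
    · exact le_rfl
    · have h2 : ((i : ℕ) = n - 1) = False := by
        simp only [eq_iff_iff, iff_false]
        have hj := j.isLt
        have hij' : (i : ℕ) < (j : ℕ) := hlt
        omega
      have h1 : eigsDec ρ j ≤ eigsDec ρ i := antitone_eigsDec ρ hij
      simp only [hydef, h2, if_false, sub_zero]
      split_ifs with h
      · linarith
      · linarith
  have hxsum : ∑ i, eigsDec (ρ - σ) i = 0 := by
    have h1 : ∑ i, eigsDec (ρ - σ) i = ∑ i, hA.eigenvalues i := by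
      simp only [eigsDec_eq hA]
      exact Equiv.sum_comp (eigPerm hA) hA.eigenvalues
    rw [h1, ← trace_re_eq_sum_eigenvalues hA, Matrix.trace_sub, hρtr, hσtr]
    simp
  have hρsum : ∑ i, eigsDec ρ i = 1 := by
    have h1 : ∑ i, eigsDec ρ i = ∑ i, hρP.isHermitian.eigenvalues i := by
      simp only [eigsDec_eq hρP.isHermitian]
      exact Equiv.sum_comp _ _
    rw [h1, ← trace_re_eq_sum_eigenvalues hρP.isHermitian, hρtr]
    simp
  have hitesum : ∑ i : Fin n, (if (i : ℕ) = n - 1 then (1 : ℝ) else 0) = 1 := by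
    have h2 : ∀ i : Fin n, ((i : ℕ) = n - 1) ↔ (i = ⟨n - 1, by omega⟩) := fun i => by
      rw [Fin.ext_iff]
    simp only [h2]
    rw [Finset.sum_ite_eq' Finset.univ (⟨n - 1, by omega⟩ : Fin n) (fun _ => (1 : ℝ))]
    simp
  have hysum : ∑ i, y i = 0 := by
    simp only [hydef]
    rw [Finset.sum_sub_distrib, hρsum, hitesum]
    norm_num
  constructor
  · intro k
    rw [sortDec_eq_of_antitone (antitone_eigsDec (ρ - σ)), sortDec_eq_of_antitone hyAnti]
    by_cases hk : k < n
    · have hy' : ∑ i ∈ Finset.univ.filter (fun i : Fin n => (i : ℕ) < k), y i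
          = ∑ i ∈ Finset.univ.filter (fun i : Fin n => (i : ℕ) < k), eigsDec ρ i := by
        refine Finset.sum_congr rfl fun i hi => ?_
        simp only [Finset.mem_filter] at hi
        have h3 : ((i : ℕ) = n - 1) = False := by
          simp only [eq_iff_iff, iff_false]
          omega
        simp [hydef, h3]
      rw [hy']
      exact kyFan hk hρP hσP
    · push_neg at hk
      have hfilter : Finset.univ.filter (fun i : Fin n => (i : ℕ) < k) = Finset.univ :=
        Finset.filter_true_of_mem fun i _ => lt_of_lt_of_le i.isLt hk
      rw [hfilter, hxsum, hysum]
  · rw [hxsum, hysum]
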